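/- Suppose c : 𝓗 → ℝ satisfies E⁻(K−H) ≤ c(K) − c(H) ≤ E⁺(K−H) for all H, K ∈ 𝓗, and suppose for every ε > 0 there exists K_ε ∈ 𝓗 with −ε ≤ K_ε ≤ 0 pointwise and c(K_ε) = ε. Then E⁻(H) ≤ c(H) ≤ E⁺(H) for every H ∈ 𝓗. -/
import Mathlib


open intervalIntegral Set

/-- `Eplus F = -∫₀¹ min_{x∈U} F(x,t) dt` -/
noncomputable def Eplus {U : Type*} [TopologicalSpace U] (F : U → ℝ → ℝ) : ℝ :=
  -∫ t in (0:ℝ)..1, sInf (Set.range fun x : U => F x t)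

/-- `Eminus F = -∫₀¹ max_{x∈U} F(x,t) dt` -/
noncomputable def Eminus {U : Type*} [TopologicalSpace U] (F : U → ℝ → ℝ) : ℝ :=
  -∫ t in (0:ℝ)..1, sSup (Set.range fun x : U => F x t)

section aux

variable {U : Type*} [TopologicalSpace U] [CompactSpace U] [Nonempty U]

lemma contSup (F : U → ℝ → ℝ) (h : Continuous fun z : U × ℝ => F z.1 z.2) :
    Continuous fun t : ℝ => sSup (Set.range fun x : U => F x t) := by
  have h' : Continuous (Function.uncurry fun (t : ℝ) (x : U) => F x t) := by
    exact h.comp (continuous_snd.prodMk continuous_fst)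
  have := isCompact_univ.continuous_sSup (f := fun (t : ℝ) (x : U) => F x t) h'
  simpa [Set.image_univ] using this

lemma contInf (F : U → ℝ → ℝ) (h : Continuous fun z : U × ℝ => F z.1 z.2) :
    Continuous fun t : ℝ => sInf (Set.range fun x : U => F x t) := by
  have h' : Continuous (Function.uncurry fun (t : ℝ) (x : U) => F x t) := by
    exact h.comp (continuous_snd.prodMk continuous_fst)
  have := isCompact_univ.continuous_sInf (f := fun (t : ℝ) (x : U) => F x t) h'
  simpa [Set.image_univ] using this

lemma bddAbove_rng (F : U → ℝ → ℝ) (h : Continuous fun z : U × ℝ => F z.1 z.2) (t : ℝ) :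
    BddAbove (Set.range fun x : U => F x t) :=
  (isCompact_range ((h.comp (continuous_id.prodMk continuous_const)))).bddAbove

lemma bddBelow_rng (F : U → ℝ → ℝ) (h : Continuous fun z : U × ℝ => F z.1 z.2) (t : ℝ) :
    BddBelow (Set.range fun x : U => F x t) :=
  (isCompact_range ((h.comp (continuous_id.prodMk continuous_const)))).bddBelow

end aux

theorem stmt3 {U : Type*} [TopologicalSpace U] [CompactSpace U] [Nonempty U]
    (𝓗 : Set (U → ℝ → ℝ))
    (hcont : ∀ H ∈ 𝓗, Continuous fun z : U × ℝ => H z.1 z.2)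
    (c : (U → ℝ → ℝ) → ℝ)
    (hc : ∀ H ∈ 𝓗, ∀ K ∈ 𝓗,
      Eminus (fun x t => K x t - H x t) ≤ c K - c H ∧
      c K - c H ≤ Eplus (fun x t => K x t - H x t))
    (hK : ∀ ε : ℝ, 0 < ε → ∃ Kε ∈ 𝓗,
      (∀ (x : U), ∀ t ∈ Set.Icc (0:ℝ) 1, -ε ≤ Kε x t ∧ Kε x t ≤ 0) ∧ c Kε = ε) :
    ∀ H ∈ 𝓗, Eminus H ≤ c H ∧ c H ≤ Eplus H := by
  intro H hH
  -- key per-ε facts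
  have main : ∀ ε : ℝ, 0 < ε → Eminus H ≤ c H ∧ c H ≤ Eplus H + ε := by
    intro ε hε
    obtain ⟨K, hK𝓗, hbd, hcK⟩ := hK ε hε
    have hHc := hcont H hH
    have hKc := hcont K hK𝓗
    have hDc : Continuous fun z : U × ℝ => H z.1 z.2 - K z.1 z.2 := hHc.sub hKc
    obtain ⟨hlow, hup⟩ := hc K hK𝓗 H hH
    -- hlow : Eminus (H - K) ≤ c H - c K,  hup : c H - c K ≤ Eplus (H - K)
    rw [hcK] at hlow hup
    constructor
    · -- Eminus H ≤ c H : show Eminus H - ε ≤ Eminus (H - K)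
      have key : Eminus H - ε ≤ Eminus (fun x t => H x t - K x t) := by
        unfold Eminus
        have hint1 : IntervalIntegrable
            (fun t => sSup (Set.range fun x : U => H x t - K x t)) MeasureTheory.volume 0 1 :=
          (contSup _ hDc).intervalIntegrable 0 1
        have hint2 : IntervalIntegrable
            (fun t => sSup (Set.range fun x : U => H x t) + ε) MeasureTheory.volume 0 1 :=
          ((contSup _ hHc).add continuous_const).intervalIntegrable 0 1
        have hmono : ∫ t in (0:ℝ)..1, sSup (Set.range fun x : U => H x t - K x t)
            ≤ ∫ t in (0:ℝ)..1, (sSup (Set.range fun x : U => H x t) + ε) := by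
          apply intervalIntegral.integral_mono_on zero_le_one hint1 hint2
          intro t ht
          apply csSup_le (Set.range_nonempty _)
          rintro y ⟨x, rfl⟩
          have h1 : H x t ≤ sSup (Set.range fun x : U => H x t) :=
            le_csSup (bddAbove_rng H hHc t) ⟨x, rfl⟩
          have h2 := (hbd x t ht).1
          show H x t - K x t ≤ _
          linarith
        have hconst : ∫ t in (0:ℝ)..1, (sSup (Set.range fun x : U => H x t) + ε)
            = (∫ t in (0:ℝ)..1, sSup (Set.range fun x : U => H x t)) + ε := by
          rw [intervalIntegral.integral_add ((contSup _ hHc).intervalIntegrable 0 1)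
            (intervalIntegrable_const)]
          simp
        rw [hconst] at hmono
        linarith
      linarith
    · -- c H ≤ Eplus H + ε : show Eplus (H - K) ≤ Eplus H
      have key : Eplus (fun x t => H x t - K x t) ≤ Eplus H := by
        unfold Eplus
        have hint1 : IntervalIntegrable
            (fun t => sInf (Set.range fun x : U => H x t)) MeasureTheory.volume 0 1 :=
          (contInf _ hHc).intervalIntegrable 0 1
        have hint2 : IntervalIntegrable
            (fun t => sInf (Set.range fun x : U => H x t - K x t)) MeasureTheory.volume 0 1 :=
          (contInf _ hDc).intervalIntegrable 0 1
        have hmono : ∫ t in (0:ℝ)..1, sInf (Set.range fun x : U => H x t)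
            ≤ ∫ t in (0:ℝ)..1, sInf (Set.range fun x : U => H x t - K x t) := by
          apply intervalIntegral.integral_mono_on zero_le_one hint1 hint2
          intro t ht
          apply le_csInf (Set.range_nonempty _)
          rintro y ⟨x, rfl⟩
          have h1 : sInf (Set.range fun x : U => H x t) ≤ H x t :=
            csInf_le (bddBelow_rng H hHc t) ⟨x, rfl⟩
          have h2 := (hbd x t ht).2
          show _ ≤ H x t - K x t
          linarith
        linarith
      linarith
  refine ⟨(main 1 one_pos).1, ?_⟩
  have := fun ε hε => (main ε hε).2
  linarith [le_of_forall_pos_le_add this]
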